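/- Let 0 < p_1 < p_2 < ... < p_n, let r be a real number, and let D = diag(p_1, ..., p_n). Then L_{-r} = -D^{-r} L_r D^{-r}, where D^{-r} = diag(p_1^{-r}, ..., p_n^{-r}). Consequently, the inertia of L_{-r} is the reverse of the inertia of L_r: π(L_{-r}) = ν(L_r), ζ(L_{-r}) = ζ(L_r), and ν(L_{-r}) = π(L_r). -/

import Mathlib

open Matrix

/-- The Loewner matrix `L_r` associated with points `p 0, ..., p (n-1)` and exponent `r`:
its `(i,j)` entry is `(p i ^ r - p j ^ r) / (p i - p j)` for `i ≠ j` and `r * p i ^ (r-1)`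
for `i = j` (powers are real powers `Real.rpow`). -/
noncomputable def loewner {n : ℕ} (p : Fin n → ℝ) (r : ℝ) : Matrix (Fin n) (Fin n) ℝ :=
  Matrix.of fun i j => if i = j then r * p i ^ (r - 1) else (p i ^ r - p j ^ r) / (p i - p j)

section Aux

variable {m : ℕ}

private lemma quadForm_eq_sum {A : Matrix (Fin m) (Fin m) ℝ} (hA : A.IsHermitian)
    (x : EuclideanSpace ℝ (Fin m)) :
    ⇑x ⬝ᵥ A *ᵥ ⇑x = ∑ i, hA.eigenvalues i * (hA.eigenvectorBasis.repr x i) ^ 2 := by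
  set b := hA.eigenvectorBasis with hb
  have hrepr : ∀ i, b.repr x i = ⇑x ⬝ᵥ ⇑(b i) := by
    intro i
    rw [b.repr_apply_apply, PiLp.inner_apply]
    simp [dotProduct, mul_comm]
  have hsum : (⇑x : Fin m → ℝ) = ∑ i, b.repr x i • ⇑(b i) := by
    conv_lhs => rw [← b.sum_repr x]
    push_cast
    rw [WithLp.ofLp_sum]
    rfl
  have hmv : A *ᵥ ⇑x = ∑ i, b.repr x i • (hA.eigenvalues i • ⇑(b i)) := by
    conv_lhs => rw [hsum, ← mulVecLin_apply, map_sum]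
    refine Finset.sum_congr rfl fun i _ => ?_
    rw [_root_.map_smul, mulVecLin_apply, hb, hA.mulVec_eigenvectorBasis]
  rw [hmv]
  simp only [dotProduct, Finset.sum_apply, Pi.smul_apply, smul_eq_mul, Finset.mul_sum]
  rw [Finset.sum_comm]
  refine Finset.sum_congr rfl fun i _ => ?_
  have : ∀ j, ⇑x j * (b.repr x i * (hA.eigenvalues i * ⇑(b i) j)) =
      (hA.eigenvalues i * b.repr x i) * (⇑x j * ⇑(b i) j) := fun j => by ring
  simp only [this, ← Finset.mul_sum]
  rw [← dotProduct, ← hrepr i]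
  ring

private lemma finrank_span_basis_image (B : Module.Basis (Fin m) ℝ (EuclideanSpace ℝ (Fin m)))
    (P : Set (Fin m)) [Fintype P] :
    Module.finrank ℝ (Submodule.span ℝ (⇑B '' P)) = Fintype.card P := by
  classical
  rw [Set.image_eq_range]
  exact finrank_span_eq_card (B.linearIndependent.comp _ Subtype.coe_injective)

private lemma finrank_le_card_sign {A : Matrix (Fin m) (Fin m) ℝ} (hA : A.IsHermitian) (ε : ℝ)
    (W : Submodule ℝ (EuclideanSpace ℝ (Fin m)))
    (hW : ∀ x ∈ W, x ≠ 0 → 0 < ε * (⇑x ⬝ᵥ A *ᵥ ⇑x)) :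
    Module.finrank ℝ W ≤ Fintype.card {i // 0 < ε * hA.eigenvalues i} := by
  classical
  set b := hA.eigenvectorBasis with hb
  set P : Set (Fin m) := {i | 0 < ε * hA.eigenvalues i} with hP
  set U : Submodule ℝ (EuclideanSpace ℝ (Fin m)) := Submodule.span ℝ (⇑b.toBasis '' Pᶜ) with hUdef
  have hU : ∀ x ∈ U, ε * (⇑x ⬝ᵥ A *ᵥ ⇑x) ≤ 0 := by
    intro x hx
    rw [quadForm_eq_sum hA x, Finset.mul_sum]
    refine Finset.sum_nonpos fun i _ => ?_
    by_cases hi : i ∈ P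
    · have hsupp := b.toBasis.mem_span_image.mp hx
      have h0 : b.repr x i = 0 := by
        rw [← b.coe_toBasis_repr_apply]
        by_contra h
        exact (hsupp (Finsupp.mem_support_iff.mpr h)) hi
      rw [h0]
      simp
    · have h1 : ε * hA.eigenvalues i ≤ 0 := le_of_not_gt hi
      have h2 := sq_nonneg (b.repr x i)
      nlinarith
  have hdisj : W ⊓ U = ⊥ := by
    rw [Submodule.eq_bot_iff]
    intro x hx
    by_contra h
    have h1 := hW x hx.1 h
    have h2 := hU x hx.2
    linarith
  have hUrank : Module.finrank ℝ U = Fintype.card (Pᶜ : Set (Fin m)) :=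
    finrank_span_basis_image b.toBasis Pᶜ
  have hsum := Submodule.finrank_sup_add_finrank_inf_eq W U
  rw [hdisj] at hsum
  have hle : Module.finrank ℝ ↥(W ⊔ U) ≤ m := by
    have h := Submodule.finrank_le (R := ℝ) (M := EuclideanSpace ℝ (Fin m)) (W ⊔ U)
    rwa [finrank_euclideanSpace, Fintype.card_fin] at h
  have hcompl : Fintype.card (Pᶜ : Set (Fin m)) = m - Fintype.card P := by
    rw [Fintype.card_compl_set, Fintype.card_fin]
  have hPle : Fintype.card P ≤ m := by
    have := Fintype.card_subtype_le (p := fun i => i ∈ P)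
    rwa [Fintype.card_fin] at this
  have hcard : Fintype.card {i // 0 < ε * hA.eigenvalues i} = Fintype.card P := rfl
  simp only [finrank_bot, add_zero] at hsum
  omega

private lemma exists_subspace_sign {A : Matrix (Fin m) (Fin m) ℝ} (hA : A.IsHermitian) (ε : ℝ) :
    ∃ W : Submodule ℝ (EuclideanSpace ℝ (Fin m)),
      Module.finrank ℝ W = Fintype.card {i // 0 < ε * hA.eigenvalues i} ∧
      ∀ x ∈ W, x ≠ 0 → 0 < ε * (⇑x ⬝ᵥ A *ᵥ ⇑x) := by
  classical
  set b := hA.eigenvectorBasis with hb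
  set P : Set (Fin m) := {i | 0 < ε * hA.eigenvalues i} with hP
  refine ⟨Submodule.span ℝ (⇑b.toBasis '' P), finrank_span_basis_image b.toBasis P, ?_⟩
  intro x hx hx0
  have hsupp := b.toBasis.mem_span_image.mp hx
  rw [quadForm_eq_sum hA x, Finset.mul_sum]
  have hterm : ∀ i, i ∈ (b.toBasis.repr x).support →
      0 < ε * (hA.eigenvalues i * b.repr x i ^ 2) := by
    intro i hi
    have hiP : i ∈ P := hsupp hi
    have hc : b.repr x i ≠ 0 := by
      rw [← b.coe_toBasis_repr_apply]
      exact Finsupp.mem_support_iff.mp hi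
    have h1 := hiP
    rw [hP, Set.mem_setOf_eq] at h1
    have h2 : 0 < b.repr x i ^ 2 := by positivity
    nlinarith
  have hne : ((b.toBasis.repr x).support).Nonempty := by
    rw [Finsupp.support_nonempty_iff]
    simp only [ne_eq, EmbeddingLike.map_eq_zero_iff]
    exact hx0
  obtain ⟨i0, hi0⟩ := hne
  refine Finset.sum_pos' (fun i _ => ?_) ⟨i0, Finset.mem_univ i0, hterm i0 hi0⟩
  by_cases hi : i ∈ (b.toBasis.repr x).support
  · exact le_of_lt (hterm i hi)
  · have : b.repr x i = 0 := by
      rw [← b.coe_toBasis_repr_apply]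
      exact Finsupp.notMem_support_iff.mp hi
    rw [this]
    simp

private lemma card_sign_eq {A B : Matrix (Fin m) (Fin m) ℝ} (hA : A.IsHermitian)
    (hB : B.IsHermitian)
    (ε δ : ℝ) (E : EuclideanSpace ℝ (Fin m) ≃ₗ[ℝ] EuclideanSpace ℝ (Fin m))
    (hE : ∀ x : EuclideanSpace ℝ (Fin m),
      ε * (⇑x ⬝ᵥ A *ᵥ ⇑x) = δ * (⇑(E x) ⬝ᵥ B *ᵥ ⇑(E x))) :
    Fintype.card {i // 0 < ε * hA.eigenvalues i}
      = Fintype.card {i // 0 < δ * hB.eigenvalues i} := by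
  have key : ∀ (C D : Matrix (Fin m) (Fin m) ℝ) (hC : C.IsHermitian) (hD : D.IsHermitian)
      (a c : ℝ) (F : EuclideanSpace ℝ (Fin m) ≃ₗ[ℝ] EuclideanSpace ℝ (Fin m)),
      (∀ x : EuclideanSpace ℝ (Fin m), a * (⇑x ⬝ᵥ C *ᵥ ⇑x) = c * (⇑(F x) ⬝ᵥ D *ᵥ ⇑(F x))) →
      Fintype.card {i // 0 < a * hC.eigenvalues i}
        ≤ Fintype.card {i // 0 < c * hD.eigenvalues i} := by
    intro C D hC hD a c F hF
    obtain ⟨W, hWrank, hWpos⟩ := exists_subspace_sign hC a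
    have hmap : Module.finrank ℝ
        (W.map (F : EuclideanSpace ℝ (Fin m) →ₗ[ℝ] EuclideanSpace ℝ (Fin m)))
        = Module.finrank ℝ W := LinearEquiv.finrank_map_eq F W
    rw [← hWrank, ← hmap]
    refine finrank_le_card_sign hD c _ ?_
    rintro y hy hy0
    obtain ⟨x, hxW, rfl⟩ := Submodule.mem_map.mp hy
    have hx0 : x ≠ 0 := fun h => hy0 (by rw [h]; exact map_zero _)
    have h := hWpos x hxW hx0
    rw [hF x] at h
    exact h
  refine le_antisymm (key A B hA hB ε δ E hE) (key B A hB hA δ ε E.symm ?_)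
  intro x
  have h := hE (E.symm x)
  rw [LinearEquiv.apply_symm_apply] at h
  exact h.symm

private lemma dot_sandwich (dd : Fin m → ℝ) (A : Matrix (Fin m) (Fin m) ℝ) (x : Fin m → ℝ) :
    x ⬝ᵥ (Matrix.diagonal dd * A * Matrix.diagonal dd) *ᵥ x
      = (Matrix.diagonal dd *ᵥ x) ⬝ᵥ A *ᵥ (Matrix.diagonal dd *ᵥ x) := by
  rw [← mulVec_mulVec, ← mulVec_mulVec, dotProduct_mulVec x (Matrix.diagonal dd)]
  congr 1
  funext i
  rw [vecMul_diagonal, mulVec_diagonal, mul_comm]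

private noncomputable def diagEquiv (d : Fin m → ℝ) (hd : ∀ i, d i ≠ 0) :
    EuclideanSpace ℝ (Fin m) ≃ₗ[ℝ] EuclideanSpace ℝ (Fin m) :=
  LinearEquiv.ofLinear (Matrix.toEuclideanLin (Matrix.diagonal d))
    (Matrix.toEuclideanLin (Matrix.diagonal fun i => (d i)⁻¹))
    (by
      apply LinearMap.ext; intro x
      apply PiLp.ext; intro i
      show (Matrix.diagonal d *ᵥ (Matrix.diagonal (fun i => (d i)⁻¹) *ᵥ ⇑x)) i = ⇑x i
      rw [mulVec_diagonal, mulVec_diagonal]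
      field_simp
      exact mul_div_cancel_left₀ _ (hd i))
    (by
      apply LinearMap.ext; intro x
      apply PiLp.ext; intro i
      show (Matrix.diagonal (fun i => (d i)⁻¹) *ᵥ (Matrix.diagonal d *ᵥ ⇑x)) i = ⇑x i
      rw [mulVec_diagonal, mulVec_diagonal]
      field_simp
      exact mul_div_cancel_left₀ _ (hd i))

private lemma diagEquiv_coe (d : Fin m → ℝ) (hd : ∀ i, d i ≠ 0)
    (x : EuclideanSpace ℝ (Fin m)) :
    ⇑(diagEquiv d hd x) = Matrix.diagonal d *ᵥ ⇑x := rfl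

private lemma card_tri (f : Fin m → ℝ) :
    Fintype.card {i // 0 < f i} + Fintype.card {i // f i = 0} + Fintype.card {i // f i < 0}
      = m := by
  classical
  simp only [Fintype.card_subtype]
  have d1 : Disjoint (Finset.univ.filter fun i => 0 < f i)
      (Finset.univ.filter fun i => f i = 0) := by
    rw [Finset.disjoint_left]
    intro a ha hb
    simp only [Finset.mem_filter] at ha hb
    linarith [ha.2, hb.2.le]
  have d2 : Disjoint ((Finset.univ.filter fun i => 0 < f i) ∪
      (Finset.univ.filter fun i => f i = 0)) (Finset.univ.filter fun i => f i < 0) := by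
    rw [Finset.disjoint_left]
    intro a ha hb
    simp only [Finset.mem_union, Finset.mem_filter] at ha hb
    rcases ha with h | h <;> linarith [hb.2]
  have h3 : ((Finset.univ.filter fun i => 0 < f i) ∪ (Finset.univ.filter fun i => f i = 0) ∪
      (Finset.univ.filter fun i => f i < 0)).card
      = (Finset.univ.filter fun i => 0 < f i).card + (Finset.univ.filter fun i => f i = 0).card
        + (Finset.univ.filter fun i => f i < 0).card := by
    rw [Finset.card_union_of_disjoint d2, Finset.card_union_of_disjoint d1]
  rw [← h3]
  have h4 : ((Finset.univ.filter fun i => 0 < f i) ∪ (Finset.univ.filter fun i => f i = 0) ∪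
      (Finset.univ.filter fun i => f i < 0)) = (Finset.univ : Finset (Fin m)) := by
    ext i
    simp only [Finset.mem_union, Finset.mem_filter, Finset.mem_univ, true_and, iff_true]
    rcases lt_trichotomy (f i) 0 with h | h | h
    · right; exact h
    · left; right; exact h
    · left; left; exact h
  rw [h4, Finset.card_univ, Fintype.card_fin]

end Aux

/-- With `D^{-r} = diag(p 0 ^ (-r), …)` one has `L_{-r} = - D^{-r} L_r D^{-r}`, and
consequently the inertia of `L_{-r}` is the reverse of the inertia of `L_r`. -/
theorem loewner_neg_exponent {n : ℕ} (p : Fin n → ℝ)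
    (hp : ∀ i, 0 < p i) (hmono : StrictMono p) (r : ℝ)
    (hA : (loewner p r).IsHermitian) (hB : (loewner p (-r)).IsHermitian) :
    loewner p (-r) =
      -(Matrix.diagonal (fun i => p i ^ (-r)) * loewner p r *
        Matrix.diagonal (fun i => p i ^ (-r))) ∧
    Fintype.card {i // 0 < hB.eigenvalues i} = Fintype.card {i // hA.eigenvalues i < 0} ∧
    Fintype.card {i // hB.eigenvalues i = 0} = Fintype.card {i // hA.eigenvalues i = 0} ∧
    Fintype.card {i // hB.eigenvalues i < 0} = Fintype.card {i // 0 < hA.eigenvalues i} := by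
  classical
  have hd0 : ∀ i, (p i : ℝ) ^ (-r) ≠ 0 := fun i => (Real.rpow_pos_of_pos (hp i) _).ne'
  have hid : loewner p (-r) = -(Matrix.diagonal (fun i => p i ^ (-r)) * loewner p r *
      Matrix.diagonal (fun i => p i ^ (-r))) := by
    ext i j
    rw [Matrix.neg_apply, Matrix.mul_diagonal, Matrix.diagonal_mul]
    by_cases hij : i = j
    · subst hij
      simp only [loewner, Matrix.of_apply, if_true, eq_self_iff_true]
      have h1 : p i ^ (-r) * (r * p i ^ (r - 1)) * p i ^ (-r)
          = r * (p i ^ (-r) * (p i ^ (r - 1) * p i ^ (-r))) := by ring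
      rw [h1, ← Real.rpow_add (hp i), ← Real.rpow_add (hp i)]
      rw [show (-r) + ((r - 1) + (-r)) = -r - 1 by ring]
      ring
    · simp only [loewner, Matrix.of_apply, if_neg hij]
      have hpij : p i - p j ≠ 0 := sub_ne_zero.mpr (hmono.injective.ne hij)
      have hir : p i ^ r ≠ 0 := (Real.rpow_pos_of_pos (hp i) _).ne'
      have hjr : p j ^ r ≠ 0 := (Real.rpow_pos_of_pos (hp j) _).ne'
      rw [Real.rpow_neg (hp i).le, Real.rpow_neg (hp j).le]
      field_simp
      ring_nf
  have hEq : ∀ x : EuclideanSpace ℝ (Fin n),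
      1 * (⇑x ⬝ᵥ loewner p (-r) *ᵥ ⇑x)
        = (-1) * (⇑(diagEquiv (fun i => p i ^ (-r)) hd0 x) ⬝ᵥ loewner p r *ᵥ
            ⇑(diagEquiv (fun i => p i ^ (-r)) hd0 x)) := by
    intro x
    rw [one_mul, neg_one_mul, diagEquiv_coe, ← dot_sandwich]
    conv_lhs => rw [hid]
    rw [Matrix.neg_mulVec, dotProduct_neg]
  have c1 := card_sign_eq hB hA 1 (-1) (diagEquiv (fun i => p i ^ (-r)) hd0) hEq
  have hEq' : ∀ x : EuclideanSpace ℝ (Fin n),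
      (-1) * (⇑x ⬝ᵥ loewner p (-r) *ᵥ ⇑x)
        = 1 * (⇑(diagEquiv (fun i => p i ^ (-r)) hd0 x) ⬝ᵥ loewner p r *ᵥ
            ⇑(diagEquiv (fun i => p i ^ (-r)) hd0 x)) := by
    intro x
    have h := hEq x
    rw [one_mul, neg_one_mul] at h
    rw [one_mul, neg_one_mul, h, neg_neg]
  have c3 := card_sign_eq hB hA (-1) 1 (diagEquiv (fun i => p i ^ (-r)) hd0) hEq'
  have e1 : Fintype.card {i // 0 < (1 : ℝ) * hB.eigenvalues i}
      = Fintype.card {i // 0 < hB.eigenvalues i} :=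
    Fintype.card_congr (Equiv.subtypeEquivRight fun i => by rw [one_mul])
  have e2 : Fintype.card {i // 0 < (-1 : ℝ) * hA.eigenvalues i}
      = Fintype.card {i // hA.eigenvalues i < 0} :=
    Fintype.card_congr (Equiv.subtypeEquivRight fun i => by rw [neg_one_mul, neg_pos])
  have e3 : Fintype.card {i // 0 < (-1 : ℝ) * hB.eigenvalues i}
      = Fintype.card {i // hB.eigenvalues i < 0} :=
    Fintype.card_congr (Equiv.subtypeEquivRight fun i => by rw [neg_one_mul, neg_pos])
  have e4 : Fintype.card {i // 0 < (1 : ℝ) * hA.eigenvalues i}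
      = Fintype.card {i // 0 < hA.eigenvalues i} :=
    Fintype.card_congr (Equiv.subtypeEquivRight fun i => by rw [one_mul])
  rw [e1, e2] at c1
  rw [e3, e4] at c3
  have t1 := card_tri hB.eigenvalues
  have t2 := card_tri hA.eigenvalues
  exact ⟨hid, c1, by omega, c3⟩
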